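/- Assume additionally that p j ≤ 1 for every job j. Let σ_0, σ_1, …, σ_T be any sequence of schedules in which each step is an improving k-swap. Then the number of steps that are of type-2 is at most (m · n) / (2 · δ_min). -/

import Mathlib

open Finset

/-- The load of machine `i` under schedule `σ` with processing times `p`. -/
noncomputable def load {n m : ℕ} (p : Fin n → ℝ) (σ : Fin n → Fin m) (i : Fin m) : ℝ :=
  ∑ j ∈ Finset.univ.filter (fun j => σ j = i), p j

/-- The makespan (maximum machine load) of schedule `σ`. -/
noncomputable def Lmax {n m : ℕ} (p : Fin n → ℝ) (σ : Fin n → Fin m) : ℝ :=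
  ⨆ i, load p σ i

/-- `δ_min`: the minimum of `|p(A) - p(B)|` over disjoint finsets of jobs `A`, `B`
with `1 ≤ |A| + |B| ≤ k`. -/
noncomputable def deltaMin (n k : ℕ) (p : Fin n → ℝ) : ℝ :=
  sInf { x | ∃ A B : Finset (Fin n), Disjoint A B ∧ 1 ≤ A.card + B.card ∧
    A.card + B.card ≤ k ∧ x = |∑ j ∈ A, p j - ∑ j ∈ B, p j| }

/-- An improving `k`-swap from `σ` to `σ'`, with critical machine `i`, machine `i' ≠ i`,
and disjoint job sets `A ⊆ σ⁻¹ {i}`, `B ⊆ σ⁻¹ {i'}` with `|A| ≥ 1`, `|A| + |B| ≤ k` and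
`0 < p(A) - p(B) < L_i(σ) - L_{i'}(σ)`; `σ'` sends `A` to `i'`, `B` to `i`, and agrees
with `σ` elsewhere. -/
def IsImprovingKSwap (k : ℕ) {n m : ℕ} (p : Fin n → ℝ) (σ σ' : Fin n → Fin m)
    (i i' : Fin m) (A B : Finset (Fin n)) : Prop :=
  load p σ i = Lmax p σ ∧
  i' ≠ i ∧
  Disjoint A B ∧
  (∀ j ∈ A, σ j = i) ∧ (∀ j ∈ B, σ j = i') ∧
  1 ≤ A.card ∧ A.card + B.card ≤ k ∧
  0 < (∑ j ∈ A, p j) - ∑ j ∈ B, p j ∧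
  (∑ j ∈ A, p j) - (∑ j ∈ B, p j) < load p σ i - load p σ i' ∧
  (∀ j ∈ A, σ' j = i') ∧ (∀ j ∈ B, σ' j = i) ∧
  ∀ j, j ∉ A → j ∉ B → σ' j = σ j

/-- The set `γ_s(σ)` of machines whose load is at most `L_max(σ) - δ_min`. -/
noncomputable def gammaS (k : ℕ) {n m : ℕ} (p : Fin n → ℝ) (σ : Fin n → Fin m) :
    Finset (Fin m) :=
  Finset.univ.filter (fun i => load p σ i ≤ Lmax p σ - deltaMin n k p)

/-- The potential `Φ(σ) = ∑_{(i,i')} |L_i(σ) - L_{i'}(σ)|` over ordered pairs of machines. -/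
noncomputable def potential {n m : ℕ} (p : Fin n → ℝ) (σ : Fin n → Fin m) : ℝ :=
  ∑ i : Fin m, ∑ i' : Fin m, |load p σ i - load p σ i'|



lemma abs_pair (a b a' b' x : ℝ) (h1 : a ≤ a') (h2 : a ≤ b') (h3 : a' ≤ b) (h4 : b' ≤ b)
    (h5 : a' + b' = a + b) :
    |a' - x| + |b' - x| ≤ |a - x| + |b - x| := by
  rcases abs_cases (a' - x) with ⟨e1, f1⟩ | ⟨e1, f1⟩ <;>
  rcases abs_cases (b' - x) with ⟨e2, f2⟩ | ⟨e2, f2⟩ <;>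
  rcases abs_cases (a - x) with ⟨e3, f3⟩ | ⟨e3, f3⟩ <;>
  rcases abs_cases (b - x) with ⟨e4, f4⟩ | ⟨e4, f4⟩ <;>
  rw [e1, e2, e3, e4] <;> linarith

lemma load_le_Lmax' {n m : ℕ} [NeZero m] (p : Fin n → ℝ) (σ : Fin n → Fin m) (j : Fin m) :
    load p σ j ≤ Lmax p σ :=
  le_ciSup (Set.Finite.bddAbove (Set.finite_range _)) j

lemma swap_filter {n m : ℕ} {σ σ' : Fin n → Fin m} {i i' : Fin m} {A B : Finset (Fin n)}
    (hne : i' ≠ i) (hAB : Disjoint A B)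
    (hA : ∀ j ∈ A, σ j = i) (hB : ∀ j ∈ B, σ j = i')
    (hA' : ∀ j ∈ A, σ' j = i') (hB' : ∀ j ∈ B, σ' j = i)
    (hrest : ∀ j, j ∉ A → j ∉ B → σ' j = σ j) :
    Finset.univ.filter (fun j => σ' j = i) = (Finset.univ.filter (fun j => σ j = i)) \ A ∪ B := by
  ext j
  simp only [mem_union, mem_sdiff, mem_filter, mem_univ, true_and]
  by_cases hjA : j ∈ A
  · simp [hA' j hjA, hne, hjA, Finset.disjoint_left.mp hAB hjA]
  · by_cases hjB : j ∈ B
    · simp [hB' j hjB, hjB]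
    · simp [hrest j hjA hjB, hjA, hjB]

lemma swap_filter_other {n m : ℕ} {σ σ' : Fin n → Fin m} {i i' : Fin m} {A B : Finset (Fin n)}
    (hA : ∀ j ∈ A, σ j = i) (hB : ∀ j ∈ B, σ j = i')
    (hA' : ∀ j ∈ A, σ' j = i') (hB' : ∀ j ∈ B, σ' j = i)
    (hrest : ∀ j, j ∉ A → j ∉ B → σ' j = σ j)
    (a : Fin m) (ha : a ≠ i) (ha' : a ≠ i') :
    Finset.univ.filter (fun j => σ' j = a) = Finset.univ.filter (fun j => σ j = a) := by
  ext j
  simp only [mem_filter, mem_univ, true_and]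
  by_cases hjA : j ∈ A
  · simp [hA' j hjA, hA j hjA, Ne.symm ha, Ne.symm ha']
  · by_cases hjB : j ∈ B
    · simp [hB' j hjB, hB j hjB, Ne.symm ha, Ne.symm ha']
    · simp [hrest j hjA hjB]

lemma swap_load {n m : ℕ} {p : Fin n → ℝ} {σ σ' : Fin n → Fin m} {i i' : Fin m}
    {A B : Finset (Fin n)}
    (hne : i' ≠ i) (hAB : Disjoint A B)
    (hA : ∀ j ∈ A, σ j = i) (hB : ∀ j ∈ B, σ j = i')
    (hA' : ∀ j ∈ A, σ' j = i') (hB' : ∀ j ∈ B, σ' j = i)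
    (hrest : ∀ j, j ∉ A → j ∉ B → σ' j = σ j) :
    load p σ' i = load p σ i - ((∑ j ∈ A, p j) - ∑ j ∈ B, p j) := by
  have hAsub : A ⊆ Finset.univ.filter (fun j => σ j = i) := fun j hj => by
    simp [mem_filter, hA j hj]
  have hdisj : Disjoint ((Finset.univ.filter (fun j => σ j = i)) \ A) B := by
    rw [Finset.disjoint_left]
    intro x hx hxB
    have := (mem_filter.mp (mem_sdiff.mp hx).1).2
    rw [hB x hxB] at this
    exact hne this
  unfold load
  rw [swap_filter hne hAB hA hB hA' hB' hrest, Finset.sum_union hdisj,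
    Finset.sum_sdiff_eq_sub hAsub]
  ring
lemma pot_split {m : ℕ} (f : Fin m → ℝ) (i i' : Fin m) (hne : i' ≠ i) :
    ∑ a : Fin m, ∑ b : Fin m, |f a - f b|
      = (∑ a ∈ univ \ {i, i'}, ∑ b ∈ univ \ {i, i'}, |f a - f b|)
        + (∑ b ∈ univ \ {i, i'}, 2 * (|f i - f b| + |f i' - f b|))
        + 2 * |f i - f i'| := by
  have key : ∀ gfun : Fin m → ℝ, ∑ a : Fin m, gfun a
      = (∑ a ∈ univ \ {i, i'}, gfun a) + (gfun i + gfun i') := by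
    intro gfun
    rw [← Finset.sum_sdiff (Finset.subset_univ ({i, i'} : Finset (Fin m)))]
    congr 1
    exact Finset.sum_pair (Ne.symm hne)
  rw [key]
  have inner : ∀ a, ∑ b : Fin m, |f a - f b|
      = (∑ b ∈ univ \ {i, i'}, |f a - f b|) + (|f a - f i| + |f a - f i'|) :=
    fun a => key _
  simp only [inner]
  rw [Finset.sum_add_distrib]
  have hcomm : ∑ a ∈ univ \ {i, i'}, (|f a - f i| + |f a - f i'|)
      = ∑ b ∈ univ \ {i, i'}, (|f i - f b| + |f i' - f b|) :=
    Finset.sum_congr rfl fun b _ => by rw [abs_sub_comm, abs_sub_comm (f b)]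
  have hmul : ∑ b ∈ univ \ {i, i'}, 2 * (|f i - f b| + |f i' - f b|)
      = 2 * ∑ b ∈ univ \ {i, i'}, (|f i - f b| + |f i' - f b|) := by
    rw [Finset.mul_sum]
  have hsplit2 : ∑ b ∈ univ \ {i, i'}, (|f i - f b| + |f i' - f b|)
      = (∑ b ∈ univ \ {i, i'}, |f i - f b|) + ∑ b ∈ univ \ {i, i'}, |f i' - f b| :=
    Finset.sum_add_distrib
  rw [hcomm, hmul, hsplit2]
  simp only [sub_self, abs_zero, abs_sub_comm (f i') (f i)]
  ring

lemma pot_nonneg {n m : ℕ} (p : Fin n → ℝ) (σ : Fin n → Fin m) : 0 ≤ potential p σ :=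
  Finset.sum_nonneg fun _ _ => Finset.sum_nonneg fun _ _ => abs_nonneg _

lemma pot_bound {n m : ℕ} (p : Fin n → ℝ) (hp : ∀ j, 0 < p j) (hp1 : ∀ j, p j ≤ 1)
    (σ : Fin n → Fin m) : potential p σ ≤ 2 * m * n := by
  have hload : ∀ a, 0 ≤ load p σ a := fun a => Finset.sum_nonneg fun j _ => (hp j).le
  have hsum : ∑ a, load p σ a ≤ (n : ℝ) := by
    have h1 : ∑ a, load p σ a = ∑ j, p j := by
      unfold load
      rw [Finset.sum_fiberwise_of_maps_to (fun x _ => Finset.mem_univ (σ x)) p]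
    have h2 : ∑ j : Fin n, p j ≤ ∑ j : Fin n, (1 : ℝ) :=
      Finset.sum_le_sum fun j _ => hp1 j
    simpa [h1] using h2
  have h3 : potential p σ ≤ ∑ a : Fin m, ∑ b : Fin m, (load p σ a + load p σ b) := by
    refine Finset.sum_le_sum fun a _ => Finset.sum_le_sum fun b _ => ?_
    calc |load p σ a - load p σ b| ≤ |load p σ a| + |load p σ b| := abs_sub _ _
      _ = load p σ a + load p σ b := by
          rw [abs_of_nonneg (hload a), abs_of_nonneg (hload b)]
  have h4 : ∑ a : Fin m, ∑ b : Fin m, (load p σ a + load p σ b)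
      = 2 * m * ∑ a, load p σ a := by
    simp [Finset.sum_add_distrib, Finset.sum_const, Finset.card_univ, mul_comm]
    rw [← Finset.sum_mul]
    ring
  rw [h4] at h3
  have hm0 : (0:ℝ) ≤ 2 * m := by positivity
  nlinarith [Finset.sum_nonneg (fun a (_ : a ∈ (univ : Finset (Fin m))) => hload a)]
lemma step_pot {n m k : ℕ} [NeZero m] {p : Fin n → ℝ}
    {σ σ' : Fin n → Fin m} {i i' : Fin m} {A B : Finset (Fin n)}
    (h : IsImprovingKSwap k p σ σ' i i' A B) :
    potential p σ' + (if i' ∈ gammaS k p σ' then 4 * deltaMin n k p else 0)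
      ≤ potential p σ := by
  obtain ⟨hcrit, hne, hAB, hA, hB, hcard1, hcardk, hpos, hlt, hA', hB', hrest⟩ := h
  set δ := deltaMin n k p with hδdef
  set Δ := (∑ j ∈ A, p j) - ∑ j ∈ B, p j with hΔdef
  have hgi : load p σ' i = load p σ i - Δ :=
    swap_load hne hAB hA hB hA' hB' hrest
  have hgi' : load p σ' i' = load p σ i' + Δ := by
    have := swap_load (p := p) (σ := σ) (σ' := σ') (Ne.symm hne) hAB.symm hB hA hB' hA'
      (fun j hjB hjA => hrest j hjA hjB)
    rw [this]; ring
  have hgo : ∀ a, a ≠ i → a ≠ i' → load p σ' a = load p σ a := by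
    intro a ha ha'
    unfold load
    rw [swap_filter_other hA hB hA' hB' hrest a ha ha']
  have hle : ∀ a, load p σ a ≤ load p σ i := fun a => hcrit ▸ load_le_Lmax' p σ a
  have hδΔ : δ ≤ Δ := by
    have habs : |Δ| = Δ := abs_of_pos hpos
    rw [← habs, hδdef]
    apply csInf_le
    · exact ⟨0, fun x ⟨A', B', _, _, _, hx⟩ => hx ▸ abs_nonneg _⟩
    · exact ⟨A, B, hAB, by omega, hcardk, rfl⟩
  have hLmax' : Lmax p σ' ≤ load p σ i := by
    apply ciSup_le
    intro a
    by_cases h1 : a = i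
    · subst h1; rw [hgi]; linarith
    by_cases h2 : a = i'
    · subst h2; rw [hgi']; linarith
    · rw [hgo a h1 h2]; exact hle a
  -- pair bound
  have hP : |load p σ' i - load p σ' i'|
      ≤ |load p σ i - load p σ i'| - (if i' ∈ gammaS k p σ' then 2 * δ else 0) := by
    have habs : |load p σ i - load p σ i'| = load p σ i - load p σ i' :=
      abs_of_pos (by linarith)
    rw [hgi, hgi', habs]
    split
    · next ht =>
        have hload' : load p σ' i' ≤ Lmax p σ' - δ := (Finset.mem_filter.mp ht).2
        rw [hgi'] at hload'
        have hD : load p σ i' + Δ + δ ≤ load p σ i := by linarith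
        exact abs_le.mpr ⟨by linarith, by linarith⟩
    · next ht =>
        rw [sub_zero]
        exact abs_le.mpr ⟨by linarith, by linarith⟩
  -- per-machine bound
  have hb : ∀ b, b ∈ univ \ ({i, i'} : Finset (Fin m)) →
      2 * (|load p σ' i - load p σ' b| + |load p σ' i' - load p σ' b|)
        ≤ 2 * (|load p σ i - load p σ b| + |load p σ i' - load p σ b|) := by
    intro b hbmem
    simp only [Finset.mem_sdiff, Finset.mem_insert, Finset.mem_singleton, not_or] at hbmem
    obtain ⟨-, hb1, hb2⟩ := hbmem
    rw [hgo b hb1 hb2, hgi, hgi']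
    have key := abs_pair (load p σ i') (load p σ i) (load p σ i' + Δ) (load p σ i - Δ)
      (load p σ b) (by linarith) (by linarith) (by linarith) (by linarith) (by ring)
    linarith
  have e1 : potential p σ = ∑ a : Fin m, ∑ b : Fin m, |load p σ a - load p σ b| := rfl
  have e2 : potential p σ' = ∑ a : Fin m, ∑ b : Fin m, |load p σ' a - load p σ' b| := rfl
  rw [e1, e2, pot_split (load p σ) i i' hne, pot_split (load p σ') i i' hne]
  have hU : ∑ a ∈ univ \ ({i, i'} : Finset (Fin m)), ∑ b ∈ univ \ ({i, i'} : Finset (Fin m)),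
      |load p σ' a - load p σ' b|
      = ∑ a ∈ univ \ ({i, i'} : Finset (Fin m)), ∑ b ∈ univ \ ({i, i'} : Finset (Fin m)),
      |load p σ a - load p σ b| := by
    refine Finset.sum_congr rfl fun a ha => Finset.sum_congr rfl fun b hbm => ?_
    simp only [Finset.mem_sdiff, Finset.mem_insert, Finset.mem_singleton, not_or] at ha hbm
    rw [hgo a ha.2.1 ha.2.2, hgo b hbm.2.1 hbm.2.2]
  have hV : ∑ b ∈ univ \ ({i, i'} : Finset (Fin m)),
        2 * (|load p σ' i - load p σ' b| + |load p σ' i' - load p σ' b|)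
      ≤ ∑ b ∈ univ \ ({i, i'} : Finset (Fin m)),
        2 * (|load p σ i - load p σ b| + |load p σ i' - load p σ b|) :=
    Finset.sum_le_sum hb
  have hite : (if i' ∈ gammaS k p σ' then (4:ℝ) * δ else 0)
      = 2 * (if i' ∈ gammaS k p σ' then 2 * δ else 0) := by
    split <;> ring
  rw [hU, hite]
  linarith

/-- If additionally all processing times are at most `1`, then in any sequence of
improving `k`-swaps the number of steps of type-2 (i.e. steps whose machine `i'` lands in
`γ_s` after the swap) is at most `m · n / (2 · δ_min)`. -/
theorem type2_steps_le {n m k : ℕ} (hm : 2 ≤ m) (hk : 1 ≤ k)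
    (p : Fin n → ℝ) (hp : ∀ j, 0 < p j) (hp1 : ∀ j, p j ≤ 1)
    (hδ : 0 < deltaMin n k p)
    (T : ℕ) (σ : ℕ → Fin n → Fin m) (i i' : ℕ → Fin m)
    (A B : ℕ → Finset (Fin n))
    (hsteps : ∀ t < T, IsImprovingKSwap k p (σ t) (σ (t + 1)) (i t) (i' t) (A t) (B t)) :
    (((Finset.range T).filter (fun t => i' t ∈ gammaS k p (σ (t + 1)))).card : ℝ) ≤
      (m : ℝ) * (n : ℝ) / (2 * deltaMin n k p) := by
  haveI : NeZero m := ⟨by omega⟩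
  set δ := deltaMin n k p with hδdef
  have htel : ∀ t, t ≤ T → potential p (σ t) +
      4 * δ * (((Finset.range t).filter
        (fun s => i' s ∈ gammaS k p (σ (s + 1)))).card : ℝ) ≤ potential p (σ 0) := by
    intro t
    induction t with
    | zero => simp
    | succ t ih =>
      intro ht
      have ih' := ih (by omega)
      have hstep := step_pot (hsteps t (by omega))
      rw [Finset.range_add_one, Finset.filter_insert]
      by_cases hc : i' t ∈ gammaS k p (σ (t + 1))
      · rw [if_pos hc, Finset.card_insert_of_notMem (by simp)]
        rw [if_pos hc] at hstep
        push_cast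
        linarith
      · rw [if_neg hc]
        rw [if_neg hc] at hstep
        linarith
  have h0 : potential p (σ 0) ≤ 2 * m * n := pot_bound p hp hp1 (σ 0)
  have hT : 0 ≤ potential p (σ T) := pot_nonneg p (σ T)
  have hfin := htel T le_rfl
  rw [le_div_iff₀ (by positivity : (0:ℝ) < 2 * δ)]
  nlinarith
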